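/- Let ℬ be an abelian category and let P and Q be properties of objects of ℬ satisfying: (i) every morphism from an object satisfying P to an object satisfying Q is zero; (ii) P and Q are each closed under subobjects (if there is a monomorphism X' → X and the property holds for X, it holds for X') and under finite biproducts; (iii) every monomorphism between objects satisfying P admits a retraction; (iv) every epimorphism between objects satisfying Q admits a section. Let S : 0 → A → B → C → 0 and S' : 0 → A' → B' → C' → 0 be short exact sequences with P(A), P(A'), Q(C), Q(C'). Suppose B' is a subquotient of the n-fold biproduct B^{⊕n} for some natural number n, i.e. there exist an object D, a monomorphism D → B^{⊕n} and an epimorphism D → B'. Then there exist a natural number k and morphisms φ₁, …, φ_k : A → A' and ψ₁, …, ψ_k : C' → C such that extClass(S') = Σ_{i=1}^{k} (ψ_i)^*((φ_i)_*(extClass(S))) in Ext¹(C', A'). -/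

import Mathlib

universe w v u

open CategoryTheory CategoryTheory.Limits CategoryTheory.Abelian

attribute [local instance] CategoryTheory.Abelian.hasFiniteBiproducts

namespace ExtSumAux

open DerivedCategory

variable {C : Type u} [Category.{v} C] [Abelian C]

lemma map_descShortComplex {S S' : ShortComplex (CochainComplex C ℤ)} (φ : S ⟶ S') :
    CochainComplex.mappingCone.map S.f S'.f φ.τ₁ φ.τ₂ φ.comm₁₂.symm ≫
      CochainComplex.mappingCone.descShortComplex S' =
    CochainComplex.mappingCone.descShortComplex S ≫ φ.τ₃ := by
  ext n
  rw [CochainComplex.mappingCone.ext_from_iff _ (n+1) n rfl]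
  constructor
  · simp [CochainComplex.mappingCone.map]
  · simp [CochainComplex.mappingCone.map, ← HomologicalComplex.comp_f, φ.comm₂₃]

lemma triangleOfSESδ_naturality [HasDerivedCategory.{w} C]
    {S S' : ShortComplex (CochainComplex C ℤ)} (φ : S ⟶ S')
    (hS : S.ShortExact) (hS' : S'.ShortExact) :
    Q.map φ.τ₃ ≫ triangleOfSESδ hS' = triangleOfSESδ hS ≫ (Q.map φ.τ₁)⟦(1 : ℤ)⟧' := by
  exact (DerivedCategory.triangleOfSESδ_naturality hS hS' φ).symm

lemma singleδ_naturality [HasDerivedCategory.{w} C] {T T' : ShortComplex C} (φ : T ⟶ T')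
    (hT : T.ShortExact) (hT' : T'.ShortExact) :
    (DerivedCategory.singleFunctor C 0).map φ.τ₃ ≫ hT'.singleδ =
      hT.singleδ ≫ ((DerivedCategory.singleFunctor C 0).map φ.τ₁)⟦(1 : ℤ)⟧' := by
  exact (ShortComplex.ShortExact.singleTriangle.map hT hT' φ).comm₃.symm

lemma extClass_naturality [HasExt.{w} C] {T T' : ShortComplex C} (φ : T ⟶ T')
    (hT : T.ShortExact) (hT' : T'.ShortExact) :
    (Ext.mk₀ φ.τ₃).comp hT'.extClass (zero_add 1) =
      hT.extClass.comp (Ext.mk₀ φ.τ₁) (add_zero 1) := by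
  letI := HasDerivedCategory.standard C
  ext
  rw [← Abelian.Ext.singleFunctor_map_comp_hom, ← Abelian.Ext.hom_comp_singleFunctor_map_shift,
    hT.extClass_hom, hT'.extClass_hom]
  exact singleδ_naturality φ hT hT'

lemma mk₀_add {X Y : C} [HasExt.{w} C] (f g : X ⟶ Y) :
    Ext.mk₀ (f + g) = Ext.mk₀ f + Ext.mk₀ g := by
  letI := HasDerivedCategory.standard C
  ext
  simp only [Ext.mk₀_hom, Ext.add_hom, ShiftedHom.mk₀, Functor.map_add, Preadditive.add_comp]

lemma mk₀_sum {X Y : C} [HasExt.{w} C] {ι : Type*} (s : Finset ι) (f : ι → (X ⟶ Y)) :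
    Ext.mk₀ (∑ i ∈ s, f i) = ∑ i ∈ s, Ext.mk₀ (f i) := by
  classical
  induction s using Finset.induction with
  | empty => simp
  | insert a s h ih => rw [Finset.sum_insert h, Finset.sum_insert h, mk₀_add, ih]

lemma sum_comp {X Y Z : C} [HasExt.{w} C] {ι : Type*} (s : Finset ι) {a b c : ℕ}
    (f : ι → Abelian.Ext X Y a) (β : Abelian.Ext Y Z b) (h : a + b = c) :
    (∑ i ∈ s, f i).comp β h = ∑ i ∈ s, (f i).comp β h :=
  map_sum ((Ext.bilinearComp X Y Z a b c h).flip β) f s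

lemma comp_sum {X Y Z : C} [HasExt.{w} C] {ι : Type*} (s : Finset ι) {a b c : ℕ}
    (α : Abelian.Ext X Y a) (f : ι → Abelian.Ext Y Z b) (h : a + b = c) :
    α.comp (∑ i ∈ s, f i) h = ∑ i ∈ s, α.comp (f i) h :=
  map_sum (Ext.bilinearComp X Y Z a b c h α) f s

/-- The `n`-fold biproduct of a short complex. -/
@[reducible] noncomputable def powSC (S : ShortComplex C) (n : ℕ) : ShortComplex C :=
  ShortComplex.mk (biproduct.map fun _ : Fin n => S.f) (biproduct.map fun _ : Fin n => S.g)
    (by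
      apply biproduct.hom_ext
      intro j
      simp [biproduct.map_π, S.zero])

/-- The inclusion of a short complex into its `n`-fold power. -/
noncomputable def inclHom (S : ShortComplex C) (n : ℕ) (i : Fin n) : S ⟶ powSC S n where
  τ₁ := biproduct.ι (fun _ : Fin n => S.X₁) i
  τ₂ := biproduct.ι (fun _ : Fin n => S.X₂) i
  τ₃ := biproduct.ι (fun _ : Fin n => S.X₃) i
  comm₁₂ := biproduct.ι_map (fun _ : Fin n => S.f) i
  comm₂₃ := biproduct.ι_map (fun _ : Fin n => S.g) i

lemma powSC_shortExact {S : ShortComplex C} (hS : S.ShortExact) (n : ℕ) :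
    (powSC S n).ShortExact := by
  have := hS.mono_f
  have := hS.epi_g
  have hmono : Mono (powSC S n).f := by
    rw [Preadditive.mono_iff_cancel_zero]
    intro Z u hu
    dsimp only [powSC] at hu ⊢
    apply biproduct.hom_ext
    intro j
    have h2 := hu =≫ biproduct.π (fun _ : Fin n => S.X₂) j
    rw [zero_comp, Category.assoc, biproduct.map_π, ← Category.assoc] at h2
    rw [zero_comp]
    exact zero_of_comp_mono S.f h2
  have hepi : Epi (powSC S n).g := by
    rw [Preadditive.epi_iff_cancel_zero]
    intro Z u hu
    dsimp only [powSC] at hu ⊢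
    apply biproduct.hom_ext'
    intro j
    have h2 := biproduct.ι (fun _ : Fin n => S.X₂) j ≫= hu
    rw [comp_zero, biproduct.ι_map_assoc] at h2
    rw [comp_zero]
    exact zero_of_epi_comp S.g h2
  have hker : IsLimit (KernelFork.ofι (powSC S n).f (powSC S n).zero) := by
    refine KernelFork.IsLimit.ofι _ _
      (fun {Z} u hu => biproduct.lift fun j => (KernelFork.IsLimit.lift'
        hS.exact.fIsKernel (u ≫ biproduct.π (fun _ : Fin n => S.X₂) j)
        (by simpa [powSC] using hu =≫ biproduct.π (fun _ : Fin n => S.X₃) j)).1) ?_ ?_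
    · intro Z u hu
      apply biproduct.hom_ext
      intro j
      have h3 := (KernelFork.IsLimit.lift' hS.exact.fIsKernel
        (u ≫ biproduct.π (fun _ : Fin n => S.X₂) j)
        (by simpa [powSC] using hu =≫ biproduct.π (fun _ : Fin n => S.X₃) j)).2
      dsimp only [powSC]
      dsimp at h3
      simp only [Category.assoc, biproduct.map_π, biproduct.lift_π_assoc]
      exact h3
    · intro Z u hu v hv
      haveI := hmono
      rw [← cancel_mono (powSC S n).f, hv]
      apply biproduct.hom_ext
      intro j
      have h3 := (KernelFork.IsLimit.lift' hS.exact.fIsKernel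
        (u ≫ biproduct.π (fun _ : Fin n => S.X₂) j)
        (by simpa [powSC] using hu =≫ biproduct.π (fun _ : Fin n => S.X₃) j)).2
      dsimp only [powSC]
      dsimp at h3
      simp only [Category.assoc, biproduct.map_π, biproduct.lift_π_assoc]
      exact h3.symm
  exact ⟨(powSC S n).exact_of_f_is_kernel hker⟩

set_option maxHeartbeats 1000000 in
lemma powSC_extClass [HasExt.{w} C] {S : ShortComplex C} (hS : S.ShortExact) (n : ℕ) :
    (powSC_shortExact hS n).extClass = ∑ i : Fin n,
      (Ext.mk₀ (biproduct.π (fun _ : Fin n => S.X₃) i)).comp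
        ((hS.extClass).comp (Ext.mk₀ (biproduct.ι (fun _ : Fin n => S.X₁) i)) (add_zero 1))
        (zero_add 1) := by
  have hnat : ∀ i : Fin n,
      (Ext.mk₀ (biproduct.ι (fun _ : Fin n => S.X₃) i)).comp
        (powSC_shortExact hS n).extClass (zero_add 1)
        = hS.extClass.comp (Ext.mk₀ (biproduct.ι (fun _ : Fin n => S.X₁) i)) (add_zero 1) := by
    intro i
    exact extClass_naturality (inclHom S n i) hS (powSC_shortExact hS n)
  calc (powSC_shortExact hS n).extClass
      = (Ext.mk₀ (𝟙 (⨁ (fun _ : Fin n => S.X₃)))).comp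
          (powSC_shortExact hS n).extClass (zero_add 1) := by rw [Ext.mk₀_id_comp]
    _ = ∑ i : Fin n, (Ext.mk₀ (biproduct.π (fun _ : Fin n => S.X₃) i ≫
          biproduct.ι (fun _ : Fin n => S.X₃) i)).comp
          (powSC_shortExact hS n).extClass (zero_add 1) := by
        rw [← sum_comp, ← mk₀_sum, biproduct.total]
    _ = ∑ i : Fin n, (Ext.mk₀ (biproduct.π (fun _ : Fin n => S.X₃) i)).comp
          ((Ext.mk₀ (biproduct.ι (fun _ : Fin n => S.X₃) i)).comp
            (powSC_shortExact hS n).extClass (zero_add 1)) (zero_add 1) := by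
        refine Finset.sum_congr rfl fun i _ => ?_
        rw [Ext.mk₀_comp_mk₀_assoc]
    _ = _ := by
        refine Finset.sum_congr rfl fun i _ => ?_
        rw [hnat i]

/-- The short exact sequence `0 → ker f → X → coim f → 0`. -/
@[reducible] noncomputable def kerSC {X Y : C} (f : X ⟶ Y) : ShortComplex C :=
  ShortComplex.mk (kernel.ι f) (cokernel.π (kernel.ι f)) (cokernel.condition _)

lemma kerSC_shortExact {X Y : C} (f : X ⟶ Y) : (kerSC f).ShortExact := by
  have : Mono (kerSC f).f := by dsimp only [kerSC]; infer_instance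
  have : Epi (kerSC f).g := by dsimp only [kerSC]; infer_instance
  exact ⟨(kerSC f).exact_of_g_is_cokernel (cokernelIsCokernel _)⟩

lemma mono_factorThruCoimage {X Y : C} (f : X ⟶ Y) : Mono (Abelian.factorThruCoimage f) := by
  have fac : Abelian.factorThruCoimage f =
      Abelian.coimageImageComparison f ≫ Abelian.image.ι f := by
    rw [← cancel_epi (Abelian.coimage.π f), Abelian.coimage.fac,
      Abelian.coimage_image_factorisation]
  rw [fac]
  exact mono_comp _ _

end ExtSumAux

/-- Main abstract result: let `ℬ` be an abelian category with classes of objects `P`, `Q`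
such that every morphism from a `P`-object to a `Q`-object is zero, `P` and `Q` are closed
under subobjects and finite biproducts, monomorphisms between `P`-objects split and
epimorphisms between `Q`-objects split. If `S : 0 → A → B → C → 0` and
`S' : 0 → A' → B' → C' → 0` are short exact with `P A`, `P A'`, `Q C`, `Q C'`, and `B'` is
a subquotient of `B^{⊕n}`, then the extension class of `S'` is a finite sum of classes
`ψᵢ^* (φᵢ)_* (extClass S)` with `φᵢ : A ⟶ A'` and `ψᵢ : C' ⟶ C`. -/
theorem extClass_eq_sum_pullback_pushout
    {ℬ : Type u} [Category.{v} ℬ] [Abelian ℬ] [HasExt.{w} ℬ]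
    (P Q : ℬ → Prop)
    (hPQ : ∀ (X Y : ℬ), P X → Q Y → ∀ f : X ⟶ Y, f = 0)
    (hPsub : ∀ (X' X : ℬ) (f : X' ⟶ X), Mono f → P X → P X')
    (hQsub : ∀ (X' X : ℬ) (f : X' ⟶ X), Mono f → Q X → Q X')
    (hPprod : ∀ (m : ℕ) (X : Fin m → ℬ), (∀ i, P (X i)) → P (⨁ X))
    (hQprod : ∀ (m : ℕ) (X : Fin m → ℬ), (∀ i, Q (X i)) → Q (⨁ X))
    (hPsplit : ∀ (X Y : ℬ) (f : X ⟶ Y), P X → P Y → Mono f → ∃ r : Y ⟶ X, f ≫ r = 𝟙 X)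
    (hQsplit : ∀ (X Y : ℬ) (f : X ⟶ Y), Q X → Q Y → Epi f → ∃ s : Y ⟶ X, s ≫ f = 𝟙 Y)
    {S S' : ShortComplex ℬ} (hS : S.ShortExact) (hS' : S'.ShortExact)
    (hA : P S.X₁) (hA' : P S'.X₁) (hC : Q S.X₃) (hC' : Q S'.X₃)
    (n : ℕ) (D : ℬ) (m : D ⟶ ⨁ (fun _ : Fin n => S.X₂)) (hm : Mono m)
    (e : D ⟶ S'.X₂) (he : Epi e) :
    ∃ (k : ℕ) (φ : Fin k → (S.X₁ ⟶ S'.X₁)) (ψ : Fin k → (S'.X₃ ⟶ S.X₃)),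
      hS'.extClass = ∑ i : Fin k,
        (Ext.mk₀ (ψ i)).comp ((hS.extClass).comp (Ext.mk₀ (φ i)) (add_zero 1))
          (zero_add 1) := by
  classical
  haveI := hS.mono_f
  haveI := hS.epi_g
  haveI := hS'.mono_f
  haveI := hS'.epi_g
  haveI := hm
  haveI := he
  have hSn := ExtSumAux.powSC_shortExact hS n
  haveI := hSn.mono_f
  haveI := hSn.epi_g
  set g2 : D ⟶ ⨁ (fun _ : Fin n => S.X₃) :=
    m ≫ biproduct.map (fun _ : Fin n => S.g) with hg2
  have hSD := ExtSumAux.kerSC_shortExact g2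
  haveI := hSD.mono_f
  haveI := hSD.epi_g
  -- the monomorphism from the third object of `kerSC g2` into `⨁ C`
  set j : (ExtSumAux.kerSC g2).X₃ ⟶ ⨁ (fun _ : Fin n => S.X₃) :=
    Abelian.factorThruCoimage g2 with hj
  have monoj : Mono j := ExtSumAux.mono_factorThruCoimage g2
  -- the monomorphism from the first object of `kerSC g2` into `⨁ A`
  have hkm : (kernel.ι g2 ≫ m) ≫ (ExtSumAux.powSC S n).g = 0 := by
    rw [Category.assoc]
    exact kernel.condition g2
  obtain ⟨ιA, hιA⟩ := KernelFork.IsLimit.lift' hSn.exact.fIsKernel (kernel.ι g2 ≫ m) hkm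
  dsimp at hιA
  have monoιA : Mono ιA := by
    haveI : Mono (ιA ≫ (ExtSumAux.powSC S n).f) := by
      rw [hιA]; exact mono_comp _ _
    exact mono_of_mono ιA (ExtSumAux.powSC S n).f
  have hPAD : P (ExtSumAux.kerSC g2).X₁ :=
    hPsub _ _ ιA monoιA (hPprod n (fun _ => S.X₁) fun _ => hA)
  have hQCD : Q (ExtSumAux.kerSC g2).X₃ :=
    hQsub _ _ j monoj (hQprod n (fun _ => S.X₃) fun _ => hC)
  -- the morphism of short complexes `kerSC g2 ⟶ powSC S n`
  let u : ExtSumAux.kerSC g2 ⟶ ExtSumAux.powSC S n :=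
    { τ₁ := ιA
      τ₂ := m
      τ₃ := j
      comm₁₂ := hιA
      comm₂₃ := (Abelian.coimage.fac g2).symm }
  -- the morphism of short complexes `kerSC g2 ⟶ S'`
  have hz : (kernel.ι g2 ≫ e) ≫ S'.g = 0 := hPQ _ _ hPAD hC' _
  obtain ⟨wτ₁, hwτ₁⟩ := KernelFork.IsLimit.lift' hS'.exact.fIsKernel (kernel.ι g2 ≫ e) hz
  dsimp at hwτ₁
  set wτ₃ : (ExtSumAux.kerSC g2).X₃ ⟶ S'.X₃ :=
    cokernel.desc (kernel.ι g2) (e ≫ S'.g)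
      (by rw [← Category.assoc]; exact hz) with hwτ₃
  let w : ExtSumAux.kerSC g2 ⟶ S' :=
    { τ₁ := wτ₁
      τ₂ := e
      τ₃ := wτ₃
      comm₁₂ := hwτ₁
      comm₂₃ := (cokernel.π_desc _ _ _).symm }
  have epiwτ₃ : Epi wτ₃ := by
    haveI : Epi ((ExtSumAux.kerSC g2).g ≫ wτ₃) := by
      have : (ExtSumAux.kerSC g2).g ≫ wτ₃ = e ≫ S'.g := cokernel.π_desc _ _ _
      rw [this]; exact epi_comp _ _
    exact epi_of_epi (ExtSumAux.kerSC g2).g wτ₃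
  -- splittings
  obtain ⟨r, hr⟩ := hPsplit _ _ ιA hPAD (hPprod n (fun _ => S.X₁) fun _ => hA) monoιA
  obtain ⟨s, hs⟩ := hQsplit _ _ wτ₃ hQCD hC' epiwτ₃
  -- naturality
  have hu : (Ext.mk₀ j).comp hSn.extClass (zero_add 1)
      = hSD.extClass.comp (Ext.mk₀ ιA) (add_zero 1) :=
    ExtSumAux.extClass_naturality u hSD hSn
  have hw : (Ext.mk₀ wτ₃).comp hS'.extClass (zero_add 1)
      = hSD.extClass.comp (Ext.mk₀ wτ₁) (add_zero 1) :=
    ExtSumAux.extClass_naturality w hSD hS'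
  have hdec : hSn.extClass = ∑ i : Fin n,
      (Ext.mk₀ (biproduct.π (fun _ : Fin n => S.X₃) i)).comp
        ((hS.extClass).comp (Ext.mk₀ (biproduct.ι (fun _ : Fin n => S.X₁) i)) (add_zero 1))
        (zero_add 1) := ExtSumAux.powSC_extClass hS n
  refine ⟨n, fun i => biproduct.ι (fun _ : Fin n => S.X₁) i ≫ r ≫ wτ₁,
    fun i => s ≫ j ≫ biproduct.π (fun _ : Fin n => S.X₃) i, ?_⟩
  calc hS'.extClass
      = (Ext.mk₀ (s ≫ wτ₃)).comp hS'.extClass (zero_add 1) := by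
        rw [hs, Ext.mk₀_id_comp]
    _ = (Ext.mk₀ s).comp ((Ext.mk₀ wτ₃).comp hS'.extClass (zero_add 1)) (zero_add 1) := by
        rw [Ext.mk₀_comp_mk₀_assoc]
    _ = (Ext.mk₀ s).comp (hSD.extClass.comp (Ext.mk₀ wτ₁) (add_zero 1)) (zero_add 1) := by
        rw [hw]
    _ = (Ext.mk₀ s).comp ((((Ext.mk₀ j).comp hSn.extClass (zero_add 1)).comp
          (Ext.mk₀ r) (add_zero 1)).comp (Ext.mk₀ wτ₁) (add_zero 1)) (zero_add 1) := by
        rw [hu]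
        simp only [Ext.comp_assoc_of_third_deg_zero, Ext.mk₀_comp_mk₀]
        rw [show (ιA ≫ r) ≫ wτ₁ = wτ₁ by rw [hr, Category.id_comp]]
    _ = ∑ i : Fin n, (Ext.mk₀ (s ≫ j ≫ biproduct.π (fun _ : Fin n => S.X₃) i)).comp
          ((hS.extClass).comp (Ext.mk₀ (biproduct.ι (fun _ : Fin n => S.X₁) i ≫ r ≫ wτ₁))
            (add_zero 1)) (zero_add 1) := by
        rw [hdec, ExtSumAux.comp_sum, ExtSumAux.sum_comp, ExtSumAux.sum_comp,
          ExtSumAux.comp_sum]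
        refine Finset.sum_congr rfl fun i _ => ?_
        simp only [Ext.comp_assoc_of_second_deg_zero, Ext.comp_assoc_of_third_deg_zero,
          Ext.mk₀_comp_mk₀, Ext.mk₀_comp_mk₀_assoc, Category.assoc]
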